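/- Let q > 1 be real, n ∈ ℕ, and t a nonzero complex number. Then t^{2n} · ₂φ₁(q^{4n−2}, q^{4n}; 0; q^{−4}, −q^{−4}/t²) = (−1)^n q^{4n²−2n} (q^{−2};q^{−4})_n · ₁φ₁(q^{4n}; q^{−2}; q^{−4}, −q^{−4n−2} t²). (Both series terminate: on the left (q^{4n};q^{−4})_j = 0 for j > n, on the right likewise, so this is an identity of polynomials in t, relating the even q-Hermite II polynomial h̃_{2n} to an ₁φ₁ eigenfunction.) -/

import Mathlib

open scoped BigOperators

/-- The q-shifted factorial `(a;p)_n = ∏_{i=0}^{n-1} (1 - a p^i)`. -/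
noncomputable def qPoch (a p : ℂ) (n : ℕ) : ℂ :=
  ∏ i ∈ Finset.range n, (1 - a * p ^ i)

/-- The basic hypergeometric series
`₁φ₁(a;c;p,z) = ∑_{j=0}^∞ ((a;p)_j / ((p;p)_j (c;p)_j)) (-1)^j p^(j(j-1)/2) z^j`. -/
noncomputable def phi11 (a c p z : ℂ) : ℂ :=
  ∑' j : ℕ, qPoch a p j / (qPoch p p j * qPoch c p j) * (-1) ^ j *
    p ^ (j * (j - 1) / 2) * z ^ j

/-- The basic hypergeometric series
`₂φ₁(a,b;0;p,z) = ∑_{j=0}^∞ ((a;p)_j (b;p)_j / (p;p)_j) z^j`. -/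
noncomputable def phi21 (a b p z : ℂ) : ℂ :=
  ∑' j : ℕ, qPoch a p j * qPoch b p j / qPoch p p j * z ^ j

variable {q : ℝ}

lemma hQ0 (hq : 1 < q) : (q : ℂ) ≠ 0 := by
  exact_mod_cast ne_of_gt (lt_trans one_pos hq)

lemma qzpow_ne_one (hq : 1 < q) {m : ℤ} (hm : m ≠ 0) : ((q : ℂ)) ^ m ≠ 1 := by
  intro h
  have h0 : (0:ℝ) < q := lt_trans one_pos hq
  have : ((q ^ m : ℝ) : ℂ) = ((1:ℝ) : ℂ) := by push_cast; simpa using h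
  have hr : q ^ m = (1:ℝ) := by exact_mod_cast this
  have := zpow_right_injective₀ h0 (ne_of_gt hq) (a₁ := m) (a₂ := 0) (by simpa using hr : q ^ m = q ^ (0:ℤ))
  exact hm this

lemma one_sub_qzpow_ne (hq : 1 < q) {m : ℤ} (hm : m ≠ 0) : (1:ℂ) - (q:ℂ) ^ m ≠ 0 := by
  intro h
  exact qzpow_ne_one hq hm (by linear_combination -h)

/-- flip a factor -/
lemma one_sub_flip (hq : 1 < q) (m : ℤ) :
    (1:ℂ) - (q:ℂ) ^ m = -(q:ℂ) ^ m * (1 - (q:ℂ) ^ (-m)) := by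
  have h := hQ0 hq
  field_simp [zpow_ne_zero, ← zpow_add₀ h]
  rw [mul_sub, mul_one, ← zpow_add₀ h, add_neg_cancel, zpow_zero]
  ring

lemma qPoch_zpow (hq : 1 < q) (e : ℤ) (m : ℕ) :
    qPoch ((q:ℂ) ^ e) ((q:ℂ) ^ (-4:ℤ)) m
      = ∏ i ∈ Finset.range m, (1 - (q:ℂ) ^ (e - 4 * (i:ℤ))) := by
  refine Finset.prod_congr rfl fun i _ => ?_
  rw [← zpow_natCast ((q:ℂ) ^ (-4:ℤ)), ← zpow_mul, ← zpow_add₀ (hQ0 hq)]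
  ring_nf

lemma prodG (hq : 1 < q) (e : ℤ) (m : ℕ) :
    ∏ i ∈ Finset.range m, (1 - (q:ℂ) ^ (e - 4 * (i:ℤ))) =
      (-1) ^ m * (q:ℂ) ^ ((m:ℤ) * e - 2 * m * (m - 1)) *
        ∏ i ∈ Finset.range m, (1 - (q:ℂ) ^ (4 * (i:ℤ) - e)) := by
  induction m with
  | zero => simp
  | succ m ih =>
      rw [Finset.prod_range_succ, ih, Finset.prod_range_succ]
      rw [one_sub_flip hq (e - 4 * (m:ℤ))]
      have : (4 * (m:ℤ) - e) = -(e - 4*(m:ℤ)) := by ring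
      rw [this]
      push_cast
      rw [show ((m:ℤ)+1) * e - 2*((m:ℤ)+1)*((m:ℤ)+1-1) = ((m:ℤ)*e - 2*m*(m-1)) + (e - 4*m) by ring,
        zpow_add₀ (hQ0 hq)]
      ring

lemma rev1 (hq : 1 < q) (n : ℕ) :
    ∏ i ∈ Finset.range n, (1 - (q:ℂ) ^ (4 * (i:ℤ) - 4 * (n:ℤ))) =
      qPoch ((q:ℂ) ^ (-4:ℤ)) ((q:ℂ) ^ (-4:ℤ)) n := by
  rw [qPoch_zpow hq]
  rw [← Finset.prod_range_reflect (fun i => (1 - (q:ℂ) ^ (4 * (i:ℤ) - 4 * (n:ℤ)))) n]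
  refine Finset.prod_congr rfl fun i hi => ?_
  have hi' := Finset.mem_range.mp hi
  congr 1
  have : ((n - 1 - i : ℕ) : ℤ) = (n:ℤ) - 1 - i := by omega
  rw [this]; ring

lemma rev2 (hq : 1 < q) (n : ℕ) :
    ∏ i ∈ Finset.range n, (1 - (q:ℂ) ^ (4 * (i:ℤ) - (4 * (n:ℤ) - 2))) =
      qPoch ((q:ℂ) ^ (-2:ℤ)) ((q:ℂ) ^ (-4:ℤ)) n := by
  rw [qPoch_zpow hq]
  rw [← Finset.prod_range_reflect (fun i => (1 - (q:ℂ) ^ (4 * (i:ℤ) - (4 * (n:ℤ) - 2)))) n]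
  refine Finset.prod_congr rfl fun i hi => ?_
  have hi' := Finset.mem_range.mp hi
  congr 1
  have : ((n - 1 - i : ℕ) : ℤ) = (n:ℤ) - 1 - i := by omega
  rw [this]; ring

lemma R1 (hq : 1 < q) (n : ℕ) :
    qPoch ((q:ℂ) ^ (4 * (n:ℤ))) ((q:ℂ) ^ (-4:ℤ)) n
      = (-1) ^ n * (q:ℂ) ^ (2 * (n:ℤ) * (n + 1)) *
        qPoch ((q:ℂ) ^ (-4:ℤ)) ((q:ℂ) ^ (-4:ℤ)) n := by
  rw [qPoch_zpow hq, prodG hq, rev1 hq]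
  congr 2
  ring

lemma R2 (hq : 1 < q) (n : ℕ) :
    qPoch ((q:ℂ) ^ (4 * (n:ℤ) - 2)) ((q:ℂ) ^ (-4:ℤ)) n
      = (-1) ^ n * (q:ℂ) ^ (2 * (n:ℤ) ^ 2) *
        qPoch ((q:ℂ) ^ (-2:ℤ)) ((q:ℂ) ^ (-4:ℤ)) n := by
  rw [qPoch_zpow hq, prodG hq, rev2 hq]
  congr 2
  ring

lemma qPochpp_ne (hq : 1 < q) (m : ℕ) :
    qPoch ((q:ℂ) ^ (-4:ℤ)) ((q:ℂ) ^ (-4:ℤ)) m ≠ 0 := by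
  rw [qPoch_zpow hq]
  refine Finset.prod_ne_zero_iff.mpr fun i _ => one_sub_qzpow_ne hq (by omega)

lemma qPochc_ne (hq : 1 < q) (m : ℕ) :
    qPoch ((q:ℂ) ^ (-2:ℤ)) ((q:ℂ) ^ (-4:ℤ)) m ≠ 0 := by
  rw [qPoch_zpow hq]
  refine Finset.prod_ne_zero_iff.mpr fun i _ => one_sub_qzpow_ne hq (by omega)

lemma van (hq : 1 < q) (n j : ℕ) (h : n < j) :
    qPoch ((q:ℂ) ^ (4 * (n:ℤ))) ((q:ℂ) ^ (-4:ℤ)) j = 0 := by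
  rw [qPoch_zpow hq]
  refine Finset.prod_eq_zero (Finset.mem_range.mpr h) ?_
  rw [show 4 * (n:ℤ) - 4 * (n:ℤ) = 0 by ring, zpow_zero]
  ring

noncomputable def Aterm (q : ℝ) (n : ℕ) (t : ℂ) (k : ℕ) : ℂ :=
  qPoch ((q:ℂ) ^ (4 * (n:ℤ) - 2)) ((q:ℂ) ^ (-4:ℤ)) k *
    qPoch ((q:ℂ) ^ (4 * (n:ℤ))) ((q:ℂ) ^ (-4:ℤ)) k /
    qPoch ((q:ℂ) ^ (-4:ℤ)) ((q:ℂ) ^ (-4:ℤ)) k * (-(q:ℂ) ^ (-4:ℤ) / t ^ 2) ^ k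

noncomputable def Bterm (q : ℝ) (n : ℕ) (t : ℂ) (j : ℕ) : ℂ :=
  qPoch ((q:ℂ) ^ (4 * (n:ℤ))) ((q:ℂ) ^ (-4:ℤ)) j /
    (qPoch ((q:ℂ) ^ (-4:ℤ)) ((q:ℂ) ^ (-4:ℤ)) j *
      qPoch ((q:ℂ) ^ (-2:ℤ)) ((q:ℂ) ^ (-4:ℤ)) j) * (-1) ^ j *
    ((q:ℂ) ^ (-4:ℤ)) ^ (j * (j - 1) / 2) * (-(q:ℂ) ^ (-4 * (n:ℤ) - 2) * t ^ 2) ^ j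

lemma base (hq : 1 < q) (n : ℕ) (t : ℂ) (ht : t ≠ 0) :
    t ^ (2 * n) * Aterm q n t n =
      (-1) ^ n * (q:ℂ) ^ (4 * (n:ℤ) ^ 2 - 2 * (n:ℤ)) *
        qPoch ((q:ℂ) ^ (-2:ℤ)) ((q:ℂ) ^ (-4:ℤ)) n := by
  have hQ := hQ0 hq
  have hD := qPochpp_ne hq n
  have ht2 : (t ^ (2*n) : ℂ) ≠ 0 := pow_ne_zero _ ht
  have hw : (-(q:ℂ) ^ (-4:ℤ) / t ^ 2) ^ n = (-1) ^ n * (q:ℂ) ^ ((-4) * (n:ℤ)) / t ^ (2*n) := by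
    rw [div_pow, neg_pow ((q:ℂ) ^ (-4:ℤ)) n, ← zpow_natCast ((q:ℂ) ^ (-4:ℤ)), ← zpow_mul,
      pow_mul]
  rw [Aterm, R1 hq, R2 hq, hw]
  rw [show ((-1)^n * (q:ℂ)^(2*(n:ℤ)^2) * qPoch ((q:ℂ)^(-2:ℤ)) ((q:ℂ)^(-4:ℤ)) n) *
      ((-1)^n * (q:ℂ)^(2*(n:ℤ)*((n:ℤ)+1)) * qPoch ((q:ℂ)^(-4:ℤ)) ((q:ℂ)^(-4:ℤ)) n) =
      ((-1)^n * (q:ℂ)^(2*(n:ℤ)^2) * qPoch ((q:ℂ)^(-2:ℤ)) ((q:ℂ)^(-4:ℤ)) n *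
      ((-1)^n * (q:ℂ)^(2*(n:ℤ)*((n:ℤ)+1)))) * qPoch ((q:ℂ)^(-4:ℤ)) ((q:ℂ)^(-4:ℤ)) n by ring,
    mul_div_cancel_right₀ _ hD]
  have cancel : ∀ y w z : ℂ, t^(2*n) * (y * (w * (z / t^(2*n)))) = y * (w * z) := by
    intro y w z; field_simp
  rw [mul_div_assoc ((-1:ℂ)^n), cancel]
  rw [show (4 * (n:ℤ)^2 - 2*n) = (2*(n:ℤ)^2) + ((2*(n:ℤ)*((n:ℤ)+1)) + ((-4)*(n:ℤ))) by ring,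
    zpow_add₀ hQ, zpow_add₀ hQ]
  have h3 : ((-1:ℂ)) ^ (n * 3) = (-1) ^ n := by
    rcases Nat.even_or_odd n with h | h
    · rw [(h.mul_right 3).neg_one_pow, h.neg_one_pow]
    · rw [(h.mul (by decide : Odd 3)).neg_one_pow, h.neg_one_pow]
  ring_nf
  rw [h3]

set_option maxHeartbeats 1000000 in
lemma Arec (hq : 1 < q) (n : ℕ) (t : ℂ) (ht : t ≠ 0) (k : ℕ) :
    Aterm q n t (k + 1) = Aterm q n t k *
      ((1 - (q:ℂ) ^ (4 * (n:ℤ) - 2 - 4 * (k:ℤ))) * (1 - (q:ℂ) ^ (4 * (n:ℤ) - 4 * (k:ℤ))) /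
        (1 - (q:ℂ) ^ (-4 - 4 * (k:ℤ))) * (-(q:ℂ) ^ (-4:ℤ) / t ^ 2)) := by
  have hQ := hQ0 hq
  have h1 : (1:ℂ) - (q:ℂ) ^ (-4 - 4 * (k:ℤ)) ≠ 0 := one_sub_qzpow_ne hq (by omega)
  have hD : ∏ i ∈ Finset.range k, (1 - (q:ℂ) ^ ((-4:ℤ) - 4 * (i:ℤ))) ≠ 0 :=
    Finset.prod_ne_zero_iff.mpr fun i _ => one_sub_qzpow_ne hq (by omega)
  have ht2 : (t^2 : ℂ) ≠ 0 := pow_ne_zero _ ht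
  rw [Aterm, Aterm, qPoch_zpow hq, qPoch_zpow hq, qPoch_zpow hq, qPoch_zpow hq,
    qPoch_zpow hq, qPoch_zpow hq, Finset.prod_range_succ, Finset.prod_range_succ,
    Finset.prod_range_succ, pow_succ]
  rw [show (4 * (n:ℤ) - 2 - 4 * (k:ℤ)) = (4 * (n:ℤ) - 2) - 4 * (k:ℤ) by ring,
    show (4 * (n:ℤ) - 4 * (k:ℤ)) = 4 * (n:ℤ) - 4 * (k:ℤ) by ring,
    show ((-4:ℤ) - 4 * (k:ℤ)) = (-4:ℤ) - 4 * (k:ℤ) by ring]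
  simp only [div_eq_mul_inv, mul_inv]
  ring

set_option maxHeartbeats 1000000 in
lemma Brec (hq : 1 < q) (n : ℕ) (t : ℂ) (ht : t ≠ 0) (j : ℕ) :
    Bterm q n t (j + 1) = Bterm q n t j *
      ((1 - (q:ℂ) ^ (4 * (n:ℤ) - 4 * (j:ℤ))) /
        ((1 - (q:ℂ) ^ (-4 - 4 * (j:ℤ))) * (1 - (q:ℂ) ^ (-2 - 4 * (j:ℤ)))) *
        (-1) * (q:ℂ) ^ ((-4) * (j:ℤ)) * (-(q:ℂ) ^ (-4 * (n:ℤ) - 2) * t ^ 2)) := by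
  have hQ := hQ0 hq
  have h1 : (1:ℂ) - (q:ℂ) ^ (-4 - 4 * (j:ℤ)) ≠ 0 := one_sub_qzpow_ne hq (by omega)
  have h2 : (1:ℂ) - (q:ℂ) ^ (-2 - 4 * (j:ℤ)) ≠ 0 := one_sub_qzpow_ne hq (by omega)
  have hD : ∏ i ∈ Finset.range j, (1 - (q:ℂ) ^ ((-4:ℤ) - 4 * (i:ℤ))) ≠ 0 :=
    Finset.prod_ne_zero_iff.mpr fun i _ => one_sub_qzpow_ne hq (by omega)
  have hC : ∏ i ∈ Finset.range j, (1 - (q:ℂ) ^ ((-2:ℤ) - 4 * (i:ℤ))) ≠ 0 :=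
    Finset.prod_ne_zero_iff.mpr fun i _ => one_sub_qzpow_ne hq (by omega)
  have hexp : (j + 1) * j / 2 = j * (j - 1) / 2 + j := by
    rw [show (j+1)*j = j*(j-1) + j*2 by
        cases j with
        | zero => rfl
        | succ m => simp [Nat.succ_sub_one]; ring,
      Nat.add_mul_div_right _ _ (by norm_num : 0 < 2)]
  have hp : ((q:ℂ) ^ (-4:ℤ)) ^ ((j+1) * ((j+1) - 1) / 2)
      = ((q:ℂ) ^ (-4:ℤ)) ^ (j * (j - 1) / 2) * (q:ℂ) ^ ((-4) * (j:ℤ)) := by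
    rw [show (j+1) * ((j+1) - 1) / 2 = (j+1) * j / 2 by rfl, hexp, pow_add]
    congr 1
    rw [← zpow_natCast ((q:ℂ) ^ (-4:ℤ)), ← zpow_mul]
  rw [Bterm, Bterm, qPoch_zpow hq, qPoch_zpow hq, qPoch_zpow hq, qPoch_zpow hq,
    qPoch_zpow hq, qPoch_zpow hq, Finset.prod_range_succ, Finset.prod_range_succ,
    Finset.prod_range_succ, pow_succ, pow_succ, hp]
  simp only [div_eq_mul_inv, mul_inv]
  ring

lemma ratio (hq : 1 < q) (t : ℂ) (ht : t ≠ 0) (n j : ℕ) (hj : j < n) :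
    ((1 - (q:ℂ) ^ (4 * (j:ℤ) + 2)) * (1 - (q:ℂ) ^ (4 * (j:ℤ) + 4)) /
        (1 - (q:ℂ) ^ (4 * (j:ℤ) - 4 * (n:ℤ))) * (-(q:ℂ) ^ (-4:ℤ) / t ^ 2)) *
      ((1 - (q:ℂ) ^ (4 * (n:ℤ) - 4 * (j:ℤ))) /
        ((1 - (q:ℂ) ^ (-4 - 4 * (j:ℤ))) * (1 - (q:ℂ) ^ (-2 - 4 * (j:ℤ)))) *
        (-1) * (q:ℂ) ^ ((-4) * (j:ℤ)) * (-(q:ℂ) ^ (-4 * (n:ℤ) - 2) * t ^ 2)) = 1 := by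
  have hQ := hQ0 hq
  have hu : (1:ℂ) - (q:ℂ) ^ (-2 - 4 * (j:ℤ)) ≠ 0 := one_sub_qzpow_ne hq (by omega)
  have hv : (1:ℂ) - (q:ℂ) ^ (-4 - 4 * (j:ℤ)) ≠ 0 := one_sub_qzpow_ne hq (by omega)
  have hw : (1:ℂ) - (q:ℂ) ^ (4 * (j:ℤ) - 4 * (n:ℤ)) ≠ 0 := one_sub_qzpow_ne hq (by omega)
  have ht2 : (t ^ 2 : ℂ) ≠ 0 := pow_ne_zero _ ht
  have haux : (q:ℂ) ^ (4 * (j:ℤ) + 2) * (q:ℂ) ^ (4 * (j:ℤ) + 4) *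
      (q:ℂ) ^ (4 * (n:ℤ) - 4 * (j:ℤ)) * (q:ℂ) ^ (-4:ℤ) * (q:ℂ) ^ ((-4) * (j:ℤ)) *
      (q:ℂ) ^ (-4 * (n:ℤ) - 2) = 1 := by
    rw [← zpow_add₀ hQ, ← zpow_add₀ hQ, ← zpow_add₀ hQ, ← zpow_add₀ hQ, ← zpow_add₀ hQ,
      show (4 * (j:ℤ) + 2) + (4 * (j:ℤ) + 4) + (4 * (n:ℤ) - 4 * (j:ℤ)) + (-4) +
        ((-4) * (j:ℤ)) + (-4 * (n:ℤ) - 2) = 0 by ring, zpow_zero]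
  rw [one_sub_flip hq (4 * (j:ℤ) + 2), one_sub_flip hq (4 * (j:ℤ) + 4),
    one_sub_flip hq (4 * (n:ℤ) - 4 * (j:ℤ)),
    show -(4 * (j:ℤ) + 2) = -2 - 4 * (j:ℤ) by ring,
    show -(4 * (j:ℤ) + 4) = -4 - 4 * (j:ℤ) by ring,
    show -(4 * (n:ℤ) - 4 * (j:ℤ)) = 4 * (j:ℤ) - 4 * (n:ℤ) by ring]
  have key : ((-(q:ℂ) ^ (4 * (j:ℤ) + 2) * (1 - (q:ℂ) ^ (-2 - 4 * (j:ℤ)))) *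
        (-(q:ℂ) ^ (4 * (j:ℤ) + 4) * (1 - (q:ℂ) ^ (-4 - 4 * (j:ℤ)))) /
        (1 - (q:ℂ) ^ (4 * (j:ℤ) - 4 * (n:ℤ))) * (-(q:ℂ) ^ (-4:ℤ) / t ^ 2)) *
      ((-(q:ℂ) ^ (4 * (n:ℤ) - 4 * (j:ℤ)) * (1 - (q:ℂ) ^ (4 * (j:ℤ) - 4 * (n:ℤ)))) /
        ((1 - (q:ℂ) ^ (-4 - 4 * (j:ℤ))) * (1 - (q:ℂ) ^ (-2 - 4 * (j:ℤ)))) *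
        (-1) * (q:ℂ) ^ ((-4) * (j:ℤ)) * (-(q:ℂ) ^ (-4 * (n:ℤ) - 2) * t ^ 2)) =
      ((1 - (q:ℂ) ^ (-2 - 4 * (j:ℤ))) * (1 - (q:ℂ) ^ (-2 - 4 * (j:ℤ)))⁻¹) *
      ((1 - (q:ℂ) ^ (-4 - 4 * (j:ℤ))) * (1 - (q:ℂ) ^ (-4 - 4 * (j:ℤ)))⁻¹) *
      ((1 - (q:ℂ) ^ (4 * (j:ℤ) - 4 * (n:ℤ))) * (1 - (q:ℂ) ^ (4 * (j:ℤ) - 4 * (n:ℤ)))⁻¹) *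
      (t ^ 2 * (t ^ 2)⁻¹) *
      ((q:ℂ) ^ (4 * (j:ℤ) + 2) * (q:ℂ) ^ (4 * (j:ℤ) + 4) * (q:ℂ) ^ (4 * (n:ℤ) - 4 * (j:ℤ)) *
        (q:ℂ) ^ (-4:ℤ) * (q:ℂ) ^ ((-4) * (j:ℤ)) * (q:ℂ) ^ (-4 * (n:ℤ) - 2)) := by
    simp only [div_eq_mul_inv, mul_inv]
    ring
  rw [key, mul_inv_cancel₀ hu, mul_inv_cancel₀ hv, mul_inv_cancel₀ hw,
    mul_inv_cancel₀ ht2, haux]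
  norm_num

lemma keylem (hq : 1 < q) (n : ℕ) (t : ℂ) (ht : t ≠ 0) :
    ∀ j, j ≤ n → t ^ (2 * n) * Aterm q n t (n - j) =
      ((-1) ^ n * (q:ℂ) ^ (4 * (n:ℤ) ^ 2 - 2 * (n:ℤ)) *
        qPoch ((q:ℂ) ^ (-2:ℤ)) ((q:ℂ) ^ (-4:ℤ)) n) * Bterm q n t j := by
  intro j
  induction j with
  | zero =>
      intro _
      have hB0 : Bterm q n t 0 = 1 := by simp [Bterm, qPoch]
      rw [Nat.sub_zero, hB0, mul_one, base hq n t ht]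
  | succ j ih =>
      intro hjn
      have hj : j < n := hjn
      have IH := ih (le_of_lt hj)
      have h1 : n - j = (n - (j + 1)) + 1 := by omega
      rw [h1, Arec hq n t ht (n - (j + 1))] at IH
      have hc : ((n - (j + 1) : ℕ) : ℤ) = (n:ℤ) - (j:ℤ) - 1 := by omega
      rw [hc, show 4 * (n:ℤ) - 2 - 4 * ((n:ℤ) - (j:ℤ) - 1) = 4 * (j:ℤ) + 2 by ring,
        show 4 * (n:ℤ) - 4 * ((n:ℤ) - (j:ℤ) - 1) = 4 * (j:ℤ) + 4 by ring,
        show (-4:ℤ) - 4 * ((n:ℤ) - (j:ℤ) - 1) = 4 * (j:ℤ) - 4 * (n:ℤ) by ring] at IH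
      rw [Brec hq n t ht j]
      linear_combination ((1 - (q:ℂ) ^ (4 * (n:ℤ) - 4 * (j:ℤ))) /
          ((1 - (q:ℂ) ^ (-4 - 4 * (j:ℤ))) * (1 - (q:ℂ) ^ (-2 - 4 * (j:ℤ)))) *
          (-1) * (q:ℂ) ^ ((-4) * (j:ℤ)) * (-(q:ℂ) ^ (-4 * (n:ℤ) - 2) * t ^ 2)) * IH -
        (t ^ (2 * n) * Aterm q n t (n - (j + 1))) * (ratio hq t ht n j hj)


/-- The even q-Hermite II polynomial as a `₁φ₁` eigenfunction:
`t^{2n} ₂φ₁(q^{4n-2}, q^{4n}; 0; q⁻⁴, -q⁻⁴/t²)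
  = (-1)^n q^{4n²-2n} (q⁻²;q⁻⁴)_n ₁φ₁(q^{4n}; q⁻²; q⁻⁴, -q^{-4n-2} t²)`. -/
theorem even_hermite_phi11 (q : ℝ) (hq : 1 < q) (n : ℕ) (t : ℂ) (ht : t ≠ 0) :
    t ^ (2 * n) * phi21 ((q : ℂ) ^ (4 * (n : ℤ) - 2)) ((q : ℂ) ^ (4 * (n : ℤ)))
        ((q : ℂ) ^ (-4 : ℤ)) (-(q : ℂ) ^ (-4 : ℤ) / t ^ 2) =
      (-1) ^ n * (q : ℂ) ^ (4 * (n : ℤ) ^ 2 - 2 * (n : ℤ)) *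
        qPoch ((q : ℂ) ^ (-2 : ℤ)) ((q : ℂ) ^ (-4 : ℤ)) n *
        phi11 ((q : ℂ) ^ (4 * (n : ℤ))) ((q : ℂ) ^ (-2 : ℤ)) ((q : ℂ) ^ (-4 : ℤ))
          (-(q : ℂ) ^ (-4 * (n : ℤ) - 2) * t ^ 2) := by
  have e1 : phi21 ((q : ℂ) ^ (4 * (n : ℤ) - 2)) ((q : ℂ) ^ (4 * (n : ℤ)))
      ((q : ℂ) ^ (-4 : ℤ)) (-(q : ℂ) ^ (-4 : ℤ) / t ^ 2)
      = ∑ j ∈ Finset.range (n + 1), Aterm q n t j := by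
    rw [phi21]
    apply tsum_eq_sum
    intro j hj
    have hjn : n < j := by simpa using hj
    rw [van hq n j hjn]
    simp
  have e2 : phi11 ((q : ℂ) ^ (4 * (n : ℤ))) ((q : ℂ) ^ (-2 : ℤ)) ((q : ℂ) ^ (-4 : ℤ))
      (-(q : ℂ) ^ (-4 * (n : ℤ) - 2) * t ^ 2)
      = ∑ j ∈ Finset.range (n + 1), Bterm q n t j := by
    rw [phi11]
    apply tsum_eq_sum
    intro j hj
    have hjn : n < j := by simpa using hj
    rw [van hq n j hjn]
    simp
  rw [e1, e2, Finset.mul_sum, Finset.mul_sum,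
    ← Finset.sum_range_reflect (fun j => t ^ (2 * n) * Aterm q n t j) (n + 1)]
  refine Finset.sum_congr rfl fun j hj => ?_
  have hjn : j ≤ n := by simpa [Nat.lt_succ_iff] using hj
  simp only [Nat.add_sub_cancel]
  exact keylem hq n t ht j hjn
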